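/- Let G : ℝ^N → ℝ be lower semicontinuous and suppose liminf_{|x|→∞} G(x)/|x| ≥ α for some α > 0. Then the set of global minimizers of the convex envelope G* equals the convex hull of the set of global minimizers of G, i.e., Argmin(G*) = co(Argmin(G)). -/

import Mathlib

open Filter

/-- A lower semicontinuous function attains its minimum on a nonempty compact set. -/
lemma lsc_exists_min {X : Type*} [TopologicalSpace X] {s : Set X} (hs : IsCompact s)
    (hne : s.Nonempty) {f : X → ℝ} (hf : LowerSemicontinuous f) :
    ∃ x ∈ s, ∀ y ∈ s, f x ≤ f y := by
  have h := hs.inter_iInter_nonempty (fun y : s => {x | f x ≤ f y.1})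
    (fun y => hf.isClosed_preimage (f y.1)) ?_
  · obtain ⟨x, hxs, hx⟩ := h
    exact ⟨x, hxs, fun y hy => Set.mem_iInter.1 hx ⟨y, hy⟩⟩
  · intro u
    rcases u.eq_empty_or_nonempty with rfl | hu
    · simpa using hne
    · obtain ⟨y, hyu, hy⟩ := Finset.exists_min_image u (fun y => f y.1) hu
      exact ⟨y.1, y.2, Set.mem_biInter fun z hz => hy z hz⟩

lemma sum_extend_emb {ι κ β : Type*} [Fintype ι] [Fintype κ] [AddCommMonoid β]
    (e : ι ↪ κ) [DecidablePred fun j => ∃ i, e i = j] (F : ι → β) :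
    ∑ j, (if h : ∃ i, e i = j then F h.choose else 0) = ∑ i, F i := by
  classical
  have h1 : ∑ j ∈ Finset.univ.map e, (if h : ∃ i, e i = j then F h.choose else 0)
      = ∑ i, F i := by
    rw [Finset.sum_map]
    refine Finset.sum_congr rfl fun i _ => ?_
    have hex : ∃ i', e i' = e i := ⟨i, rfl⟩
    rw [dif_pos hex]
    congr 1
    exact e.injective hex.choose_spec
  rw [← h1]
  symm
  apply Finset.sum_subset (Finset.subset_univ _)
  intro j _ hj
  rw [dif_neg]
  intro ⟨i, hi⟩
  exact hj (Finset.mem_map.2 ⟨i, Finset.mem_univ i, hi⟩)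

/-- The convex hull of a compact set in a finite-dimensional normed space is compact. -/
lemma isCompact_convexHull_of_isCompact {E : Type*} [NormedAddCommGroup E] [NormedSpace ℝ E]
    [FiniteDimensional ℝ E] {s : Set E} (hs : IsCompact s) :
    IsCompact (convexHull ℝ s) := by
  classical
  rcases s.eq_empty_or_nonempty with rfl | ⟨p₀, hp₀⟩
  · simp
  set n := Module.finrank ℝ E + 1 with hn
  have hmap : convexHull ℝ s =
      (fun p : (Fin n → ℝ) × (Fin n → E) => ∑ j, p.1 j • p.2 j) ''
        (stdSimplex ℝ (Fin n) ×ˢ Set.univ.pi fun _ => s) := by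
    apply Set.Subset.antisymm
    · intro x hx
      obtain ⟨ι, hι, z, w, hrz, hind, hpos, hsum, hcomb⟩ :=
        eq_pos_convex_span_of_mem_convexHull hx
      letI := hι
      have hcard : Fintype.card ι ≤ n := by
        refine hind.card_le_finrank_succ.trans ?_
        exact Nat.add_le_add_right (Submodule.finrank_le _) 1
      obtain ⟨e⟩ : Nonempty (ι ↪ Fin n) :=
        Function.Embedding.nonempty_of_card_le (by simpa using hcard)
      refine ⟨(fun j => if h : ∃ i, e i = j then w h.choose else 0,
               fun j => if h : ∃ i, e i = j then z h.choose else p₀), ⟨⟨?_, ?_⟩, ?_⟩, ?_⟩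
      · intro j
        dsimp only
        split
        · exact (hpos _).le
        · exact le_refl 0
      · exact sum_extend_emb e w ▸ hsum
      · intro j _
        dsimp only
        split
        · exact hrz ⟨_, rfl⟩
        · exact hp₀
      · dsimp only
        have hterm : ∀ j : Fin n,
            (if h : ∃ i, e i = j then w h.choose else 0) •
              (if h : ∃ i, e i = j then z h.choose else p₀)
            = (if h : ∃ i, e i = j then w h.choose • z h.choose else 0) := by
          intro j
          by_cases h : ∃ i, e i = j <;> simp [h]
        calc ∑ j, (if h : ∃ i, e i = j then w h.choose else 0) •
              (if h : ∃ i, e i = j then z h.choose else p₀)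
            = ∑ j, (if h : ∃ i, e i = j then w h.choose • z h.choose else 0) := by
              exact Finset.sum_congr rfl fun j _ => hterm j
          _ = ∑ i, w i • z i := sum_extend_emb e (fun i => w i • z i)
          _ = x := hcomb
    · rintro _ ⟨⟨w, z⟩, ⟨hw, hz⟩, rfl⟩
      exact (convex_convexHull ℝ s).sum_mem (fun j _ => hw.1 j) hw.2
        (fun j _ => subset_convexHull ℝ s (hz j (Set.mem_univ j)))
  rw [hmap]
  refine ((isCompact_stdSimplex (𝕜 := ℝ) (ι := Fin n)).prod (isCompact_univ_pi fun _ => hs)).image ?_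
  exact continuous_finset_sum _ fun j _ =>
    ((continuous_apply j).comp continuous_fst).smul ((continuous_apply j).comp continuous_snd)

/-- The convex envelope of `G`: the pointwise supremum of all convex functions lying below
`G`. -/
noncomputable def convexEnvelope {E : Type*} [AddCommGroup E] [Module ℝ E]
    (G : E → ℝ) : E → ℝ :=
  fun x => sSup {v : ℝ | ∃ g : E → ℝ,
    ConvexOn ℝ Set.univ g ∧ (∀ y, g y ≤ G y) ∧ g x = v}

/-- Let `G : ℝ^N → ℝ` be lower semicontinuous with
`liminf_{|x|→∞} G(x)/|x| ≥ α` for some `α > 0`. Then `Argmin(G*) = co(Argmin(G))`,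
where `G*` is the convex envelope of `G`. -/
theorem stmt9 (N : ℕ) (G : EuclideanSpace ℝ (Fin N) → ℝ)
    (hG : LowerSemicontinuous G)
    (α : ℝ) (hα : 0 < α)
    (hliminf : α ≤ Filter.liminf (fun x => G x / ‖x‖)
      (Bornology.cobounded (EuclideanSpace ℝ (Fin N)))) :
    {x | ∀ y, convexEnvelope G x ≤ convexEnvelope G y}
      = convexHull ℝ {x | ∀ y, G x ≤ G y} := by
  classical
  -- Step 1: eventual growth bound
  have hev : ∀ᶠ x in Bornology.cobounded (EuclideanSpace ℝ (Fin N)), α / 2 ≤ G x / ‖x‖ := by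
    rw [Filter.liminf_eq] at hliminf
    rcases Set.eq_empty_or_nonempty
      {a : ℝ | ∀ᶠ x in Bornology.cobounded (EuclideanSpace ℝ (Fin N)), a ≤ G x / ‖x‖}
      with hSe | hSne
    · rw [hSe, Real.sSup_empty] at hliminf; linarith
    · obtain ⟨a, haS, ha⟩ := exists_lt_of_lt_csSup hSne
        (lt_of_lt_of_le (by linarith : α / 2 < α) hliminf)
      exact Filter.Eventually.mono haS fun x hx => le_trans ha.le hx
  obtain ⟨R₀, -, hR₀⟩ :=
    (Filter.hasBasis_cobounded_norm (E := EuclideanSpace ℝ (Fin N))).eventually_iff.mp hev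
  have hgrow : ∀ x : EuclideanSpace ℝ (Fin N), max R₀ 1 ≤ ‖x‖ → α / 2 * ‖x‖ ≤ G x := by
    intro x hx
    have h1 : (1 : ℝ) ≤ ‖x‖ := le_trans (le_max_right _ _) hx
    have h2 : α / 2 ≤ G x / ‖x‖ := hR₀ (le_trans (le_max_left _ _) hx)
    rw [le_div_iff₀ (by linarith : (0:ℝ) < ‖x‖)] at h2
    linarith
  -- Step 2: global minimizer of G
  set R : ℝ := max (max R₀ 1) (2 * (|G 0| + 1) / α) with hRdef
  have hR1 : (1 : ℝ) ≤ R := le_trans (le_max_right _ _) (le_max_left _ _)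
  have hαR : |G 0| + 1 ≤ α / 2 * R := by
    have h1 : α / 2 * (2 * (|G 0| + 1) / α) = |G 0| + 1 := by field_simp
    have h2 : α / 2 * (2 * (|G 0| + 1) / α) ≤ α / 2 * R :=
      mul_le_mul_of_nonneg_left (le_max_right _ _) (by linarith)
    linarith
  have hBcomp : IsCompact (Metric.closedBall (0 : EuclideanSpace ℝ (Fin N)) R) := isCompact_closedBall _ _
  obtain ⟨x₀, hx₀B, hx₀min⟩ := lsc_exists_min hBcomp
    ⟨0, Metric.mem_closedBall_self (by linarith)⟩ hG
  have h0B : (0 : EuclideanSpace ℝ (Fin N)) ∈ Metric.closedBall (0 : EuclideanSpace ℝ (Fin N)) R := Metric.mem_closedBall_self (by linarith)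
  have hfar : ∀ y : EuclideanSpace ℝ (Fin N), y ∉ Metric.closedBall (0 : EuclideanSpace ℝ (Fin N)) R → α / 2 * R ≤ G y := by
    intro y hy
    rw [Metric.mem_closedBall, dist_zero_right, not_le] at hy
    have h1 : α / 2 * ‖y‖ ≤ G y := hgrow y (le_trans (le_max_left _ _) hy.le)
    have h2 : α / 2 * R ≤ α / 2 * ‖y‖ := mul_le_mul_of_nonneg_left hy.le (by linarith)
    linarith
  have hglobal : ∀ y, G x₀ ≤ G y := by
    intro y
    by_cases hy : y ∈ Metric.closedBall (0 : EuclideanSpace ℝ (Fin N)) R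
    · exact hx₀min y hy
    · have h1 := hfar y hy
      have h2 := hx₀min 0 h0B
      have h3 : G 0 ≤ |G 0| := le_abs_self _
      linarith
  set m := G x₀ with hm
  set K : Set (EuclideanSpace ℝ (Fin N)) := {x | ∀ y, G x ≤ G y} with hKdef
  have hK_eq : K = {x | G x ≤ m} :=
    Set.ext fun x => ⟨fun h => h x₀, fun h y => le_trans h (hglobal y)⟩
  have hKsub : K ⊆ Metric.closedBall (0 : EuclideanSpace ℝ (Fin N)) R := by
    intro x hx
    by_contra hxB
    have h1 := hfar x hxB
    have h2 : G x ≤ m := hx x₀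
    have h3 : m ≤ G 0 := hglobal 0
    have h4 : G 0 ≤ |G 0| := le_abs_self _
    linarith
  have hKclosed : IsClosed K := by
    rw [hK_eq]
    exact hG.isClosed_preimage m
  have hKcomp : IsCompact K := hBcomp.of_isClosed_subset hKclosed hKsub
  -- Step 3: envelope facts
  have hmS : ∀ x : EuclideanSpace ℝ (Fin N), m ∈ {v : ℝ | ∃ g : EuclideanSpace ℝ (Fin N) → ℝ,
      ConvexOn ℝ Set.univ g ∧ (∀ y, g y ≤ G y) ∧ g x = v} :=
    fun x => ⟨fun _ => m, convexOn_const m convex_univ, fun y => hglobal y, rfl⟩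
  have hbdd : ∀ x : EuclideanSpace ℝ (Fin N), BddAbove {v : ℝ | ∃ g : EuclideanSpace ℝ (Fin N) → ℝ,
      ConvexOn ℝ Set.univ g ∧ (∀ y, g y ≤ G y) ∧ g x = v} := by
    intro x
    refine ⟨G x, ?_⟩
    rintro v ⟨g, -, hgle, rfl⟩
    exact hgle x
  have hle_env : ∀ (g : EuclideanSpace ℝ (Fin N) → ℝ), ConvexOn ℝ Set.univ g → (∀ y, g y ≤ G y) →
      ∀ x, g x ≤ convexEnvelope G x :=
    fun g hg hgle x => le_csSup (hbdd x) ⟨g, hg, hgle, rfl⟩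
  have henv_ge : ∀ x, m ≤ convexEnvelope G x :=
    fun x => hle_env _ (convexOn_const m convex_univ) hglobal x
  have henv_le : ∀ x, convexEnvelope G x ≤ G x := by
    intro x
    refine csSup_le ⟨m, hmS x⟩ ?_
    rintro v ⟨g, -, hgle, rfl⟩
    exact hgle x
  have hconv : ConvexOn ℝ Set.univ (convexEnvelope G) := by
    refine ⟨convex_univ, fun x _ y _ a b ha hb hab => ?_⟩
    show sSup _ ≤ _
    refine csSup_le ⟨m, hmS _⟩ ?_
    rintro v ⟨g, hg, hgle, rfl⟩
    have h1 := hg.2 (Set.mem_univ x) (Set.mem_univ y) ha hb hab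
    have h2 : a * g x ≤ a * convexEnvelope G x :=
      mul_le_mul_of_nonneg_left (hle_env g hg hgle x) ha
    have h3 : b * g y ≤ b * convexEnvelope G y :=
      mul_le_mul_of_nonneg_left (hle_env g hg hgle y) hb
    simp only [smul_eq_mul] at h1 ⊢
    linarith
  have henv_x₀ : convexEnvelope G x₀ = m := le_antisymm (henv_le x₀) (henv_ge x₀)
  -- Step 4: the two inclusions
  ext x
  simp only [Set.mem_setOf_eq]
  constructor
  · intro hx
    have hxm : convexEnvelope G x = m :=
      le_antisymm (le_trans (hx x₀) (le_of_eq henv_x₀)) (henv_ge x)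
    by_contra hxK
    have hCH : IsCompact (convexHull ℝ K) := isCompact_convexHull_of_isCompact hKcomp
    obtain ⟨f, c, hfb, hfx⟩ := geometric_hahn_banach_closed_point
      (convex_convexHull ℝ K) hCH.isClosed hxK
    set M : ℝ := ‖f‖ with hM
    have hM0 : (0 : ℝ) ≤ M := norm_nonneg f
    set R₁ : ℝ := max (max R₀ 1) (4 * (|m| + |c| + 1) / α) with hR₁def
    have hR₁1 : (1 : ℝ) ≤ R₁ := le_trans (le_max_right _ _) (le_max_left _ _)
    set D : Set (EuclideanSpace ℝ (Fin N)) := {y ∈ Metric.closedBall (0 : EuclideanSpace ℝ (Fin N)) R₁ | c ≤ f y} with hDdef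
    have hDclosed : IsClosed D :=
      Metric.isClosed_closedBall.inter (isClosed_le continuous_const f.continuous)
    have hDcomp : IsCompact D :=
      (isCompact_closedBall _ _).of_isClosed_subset hDclosed (Set.sep_subset _ _)
    have hδex : ∃ δ : ℝ, 0 < δ ∧ δ ≤ 1 ∧ δ ≤ α / (4 * (M + 1)) ∧
        ∀ y ∈ D, m + δ * (f y - c) ≤ G y := by
      by_cases hDne : D.Nonempty
      · obtain ⟨y₁, hy₁D, hy₁min⟩ := lsc_exists_min hDcomp hDne hG
        have hy₁K : y₁ ∉ K := by
          intro hK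
          exact absurd (hfb y₁ (subset_convexHull ℝ K hK)) (not_lt.2 hy₁D.2)
        have hη0 : 0 < G y₁ - m := by
          rw [hK_eq] at hy₁K
          have : ¬ G y₁ ≤ m := hy₁K
          linarith [not_le.1 this]
        set η := G y₁ - m with hη
        have hden : (0 : ℝ) < M * R₁ + |c| + 1 := by positivity
        refine ⟨min (min 1 (α / (4 * (M + 1)))) (η / (M * R₁ + |c| + 1)), ?_, ?_, ?_, ?_⟩
        · have h1 : (0:ℝ) < α / (4 * (M + 1)) := by positivity
          have h2 : (0:ℝ) < η / (M * R₁ + |c| + 1) := div_pos hη0 hden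
          simp only [lt_min_iff]
          exact ⟨⟨one_pos, h1⟩, h2⟩
        · exact le_trans (min_le_left _ _) (min_le_left _ _)
        · exact le_trans (min_le_left _ _) (min_le_right _ _)
        · intro y hyD
          set δ := min (min 1 (α / (4 * (M + 1)))) (η / (M * R₁ + |c| + 1)) with hδ
          have hδη : δ ≤ η / (M * R₁ + |c| + 1) := min_le_right _ _
          have hδ0 : 0 ≤ δ := by
            have h2 : (0:ℝ) ≤ η / (M * R₁ + |c| + 1) := (div_pos hη0 hden).le
            have h1 : (0:ℝ) ≤ α / (4 * (M + 1)) := by positivity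
            rw [hδ]
            exact le_min (le_min zero_le_one h1) h2
          have hyn : ‖y‖ ≤ R₁ := by
            have := hyD.1
            rwa [Metric.mem_closedBall, dist_zero_right] at this
          have hfyb : f y - c ≤ M * R₁ + |c| := by
            have h1 : f y ≤ |f y| := le_abs_self _
            have h2 : |f y| ≤ M * ‖y‖ := f.le_opNorm y
            have h3 : M * ‖y‖ ≤ M * R₁ := mul_le_mul_of_nonneg_left hyn hM0
            have h4 : -c ≤ |c| := neg_le_abs c
            linarith
          have hfyc : 0 ≤ f y - c := by linarith [hyD.2]
          have h5 : δ * (f y - c) ≤ (η / (M * R₁ + |c| + 1)) * (M * R₁ + |c| + 1) := by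
            apply mul_le_mul hδη (by linarith) hfyc (div_pos hη0 hden).le
          rw [div_mul_cancel₀ _ (ne_of_gt hden)] at h5
          have h6 : G y₁ ≤ G y := hy₁min y hyD
          have : m + η = G y₁ := by rw [hη]; ring
          linarith
      · refine ⟨min 1 (α / (4 * (M + 1))), ?_, min_le_left _ _, min_le_right _ _, ?_⟩
        · have h1 : (0:ℝ) < α / (4 * (M + 1)) := by positivity
          simp only [lt_min_iff]
          exact ⟨one_pos, h1⟩
        · intro y hy
          exact absurd ⟨y, hy⟩ hDne
    obtain ⟨δ, hδ0, hδ1, hδα, hδD⟩ := hδex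
    set g : EuclideanSpace ℝ (Fin N) → ℝ := fun y => m + δ * max (f y - c) 0 with hgdef
    have hgconv : ConvexOn ℝ Set.univ g := by
      have h1 : ConvexOn ℝ Set.univ (fun y : EuclideanSpace ℝ (Fin N) => f y - c) := by
        refine ⟨convex_univ, fun p _ q _ a b ha hb hab => ?_⟩
        dsimp only
        have hfe : f (a • p + b • q) = a * f p + b * f q := by
          rw [map_add, map_smul, map_smul]; rfl
        have hc : a * c + b * c = c := by rw [← add_mul, hab, one_mul]
        simp only [smul_eq_mul]
        rw [hfe]
        linarith
      have h2 := h1.sup (convexOn_const (0 : ℝ) convex_univ)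
      have h3 := (convexOn_const (m : ℝ) convex_univ).add (ConvexOn.smul hδ0.le h2)
      convert h3 using 1
      all_goals rfl
    have hgle : ∀ y, g y ≤ G y := by
      intro y
      rcases le_or_gt (f y) c with h | h
      · have hmax : max (f y - c) 0 = 0 := max_eq_right (by linarith)
        simp only [hgdef, hmax, mul_zero, add_zero]
        exact hglobal y
      · have hmax : max (f y - c) 0 = f y - c := max_eq_left (by linarith)
        rcases le_or_gt ‖y‖ R₁ with hn | hn
        · have hyD : y ∈ D := ⟨by rwa [Metric.mem_closedBall, dist_zero_right], h.le⟩
          simp only [hgdef, hmax]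
          exact hδD y hyD
        · have hg1 : α / 2 * ‖y‖ ≤ G y := hgrow y (le_trans (le_max_left _ _) hn.le)
          have hfy : |f y| ≤ M * ‖y‖ := f.le_opNorm y
          have hyR : 4 * (|m| + |c| + 1) / α ≤ ‖y‖ := le_trans (le_max_right _ _) hn.le
          have hy1 : (1 : ℝ) ≤ ‖y‖ := le_trans hR₁1 hn.le
          have hαy : 4 * (|m| + |c| + 1) ≤ α * ‖y‖ := by
            rw [div_le_iff₀ hα] at hyR
            linarith
          have hδM : δ * (M + 1) ≤ α / 4 := by
            rw [le_div_iff₀ (by positivity : (0:ℝ) < 4 * (M + 1))] at hδα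
            linarith
          have h5 : f y - c ≤ M * ‖y‖ + |c| := by
            have := le_abs_self (f y)
            have := neg_le_abs c
            linarith
          have h6 : δ * (f y - c) ≤ δ * (M * ‖y‖ + |c|) :=
            mul_le_mul_of_nonneg_left h5 hδ0.le
          have h7 : δ * (M * ‖y‖ + |c|) ≤ α / 4 * ‖y‖ + |c| := by
            have hδM' : δ * M ≤ α / 4 := by nlinarith [hδ0.le]
            have hA : δ * (M * ‖y‖) ≤ α / 4 * ‖y‖ := by
              calc δ * (M * ‖y‖) = δ * M * ‖y‖ := by ring
                _ ≤ α / 4 * ‖y‖ := mul_le_mul_of_nonneg_right hδM' (norm_nonneg y)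
            have hB : δ * |c| ≤ |c| := mul_le_of_le_one_left (abs_nonneg c) hδ1
            linarith
          have h8 : m + α / 4 * ‖y‖ + |c| ≤ α / 2 * ‖y‖ := by
            have := le_abs_self m
            linarith
          simp only [hgdef, hmax]
          linarith
    have hgx : g x ≤ convexEnvelope G x := hle_env g hgconv hgle x
    have hmaxx : max (f x - c) 0 = f x - c := max_eq_left (by linarith)
    rw [hxm] at hgx
    simp only [hgdef, hmaxx] at hgx
    have hpos : 0 < δ * (f x - c) := mul_pos hδ0 (sub_pos.2 hfx)
    linarith
  · intro hx
    have hA : Convex ℝ {y : EuclideanSpace ℝ (Fin N) | convexEnvelope G y ≤ m} := by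
      have := hconv.convex_le m
      simpa using this
    have hKA : K ⊆ {y : EuclideanSpace ℝ (Fin N) | convexEnvelope G y ≤ m} := by
      intro y hy
      exact le_trans (henv_le y) (hy x₀)
    have hxA : x ∈ {y : EuclideanSpace ℝ (Fin N) | convexEnvelope G y ≤ m} := convexHull_min hKA hA hx
    intro y
    exact le_trans hxA (henv_ge y)
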